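/- For every q ∈ 𝔯, the determinant of 𝓗(q) is negative: -2 - 1/|q|³ - 2/|q|⁶ + (6q₂² - 3q₁²)/|q|⁵ < 0. Consequently the symmetric matrix 𝓗(q) has one positive and one negative eigenvalue. -/

import Mathlib

open Matrix

noncomputable section

/-- Euclidean norm of a point of `ℝ²`. -/
def nrm (q : ℝ × ℝ) : ℝ := Real.sqrt (q.1 ^ 2 + q.2 ^ 2)

/-- Hill's region `𝔯`. -/
def HillRegion : Set (ℝ × ℝ) :=
  {q | (3:ℝ) ^ ((4:ℝ)/3) / 2 < 1 / nrm q + (3/2) * q.1 ^ 2 ∧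
       |q.1| < (3:ℝ) ^ (-(1:ℝ)/3) ∧ |q.2| < 2 * (3:ℝ) ^ (-(4:ℝ)/3)}

/-- The symmetric matrix `𝓗(q)`. -/
def Hmat (q : ℝ × ℝ) : Matrix (Fin 2) (Fin 2) ℝ :=
  (1 / (nrm q) ^ 5) •
    !![-2 * (nrm q) ^ 5 + (nrm q) ^ 2 - 3 * q.1 ^ 2, -3 * q.1 * q.2;
       -3 * q.1 * q.2, (nrm q) ^ 5 + (nrm q) ^ 2 - 3 * q.2 ^ 2]

/-- A symmetric real `2 × 2` matrix with negative determinant has a positive and a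
negative eigenvalue. -/
lemma eig2 (M : Matrix (Fin 2) (Fin 2) ℝ) (hsym : M 1 0 = M 0 1) (hdet : M.det < 0) :
    ∃ (lp ln : ℝ) (vp vn : Fin 2 → ℝ), 0 < lp ∧ ln < 0 ∧ vp ≠ 0 ∧ vn ≠ 0 ∧
      M.mulVec vp = lp • vp ∧ M.mulVec vn = ln • vn := by
  set a := M 0 0 with ha
  set b := M 0 1 with hb
  set d := M 1 1 with hd
  have hdet' : a * d - b * b < 0 := by
    rw [Matrix.det_fin_two, hsym] at hdet
    linarith
  have hmv : ∀ v : Fin 2 → ℝ, M.mulVec v = ![a * v 0 + b * v 1, b * v 0 + d * v 1] := by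
    intro v
    funext i
    fin_cases i <;>
      simp [Matrix.mulVec, dotProduct, Fin.sum_univ_two, hsym, ← ha, ← hb, ← hd]
  by_cases hb0 : b = 0
  · rcases lt_trichotomy a 0 with hA | hA | hA
    · have hD : 0 < d := by nlinarith
      exact ⟨d, a, ![0,1], ![1,0], hD, hA, by simp [Function.ne_iff],
        by simp [Function.ne_iff],
        by rw [hmv]; funext i; fin_cases i <;> simp [hb0],
        by rw [hmv]; funext i; fin_cases i <;> simp [hb0]⟩
    · exfalso; rw [hb0, hA] at hdet'; simp at hdet'
    · have hD : d < 0 := by nlinarith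
      exact ⟨a, d, ![1,0], ![0,1], hA, hD, by simp [Function.ne_iff],
        by simp [Function.ne_iff],
        by rw [hmv]; funext i; fin_cases i <;> simp [hb0],
        by rw [hmv]; funext i; fin_cases i <;> simp [hb0]⟩
  · set D := Real.sqrt ((a - d) ^ 2 + 4 * b ^ 2) with hDdef
    have hD2 : D ^ 2 = (a - d) ^ 2 + 4 * b ^ 2 := Real.sq_sqrt (by positivity)
    have hDnn : 0 ≤ D := Real.sqrt_nonneg _
    set lp := ((a + d) + D) / 2 with hlp
    set ln := ((a + d) - D) / 2 with hln
    have hprod : lp * ln = a * d - b * b := by rw [hlp, hln]; nlinarith [hD2]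
    have hle : ln ≤ lp := by rw [hlp, hln]; linarith
    have hlpp : 0 < lp := by nlinarith
    have hlnn : ln < 0 := by nlinarith
    have hsum : lp + ln = a + d := by rw [hlp, hln]; ring
    have quad : ∀ l : ℝ, l = lp ∨ l = ln → b * b + d * (l - a) = l * (l - a) := by
      intro l hl
      have h1 : l * l - (a + d) * l + (a * d - b * b) = 0 := by
        rcases hl with h | h <;> subst h
        · rw [← hsum, ← hprod]; ring
        · rw [← hsum, ← hprod]; ring
      nlinarith [h1]
    refine ⟨lp, ln, ![b, lp - a], ![b, ln - a], hlpp, hlnn, ?_, ?_, ?_, ?_⟩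
    · intro h; exact hb0 (by simpa using congrFun h 0)
    · intro h; exact hb0 (by simpa using congrFun h 0)
    · rw [hmv]; funext i; fin_cases i
      · simp; ring
      · simpa using quad lp (Or.inl rfl)
    · rw [hmv]; funext i; fin_cases i
      · simp; ring
      · simpa using quad ln (Or.inr rfl)

lemma keyeq (r A : ℝ) (hr : 0 < r) :
    -2 - 1 / r ^ 3 - 2 / r ^ 6 + A / r ^ 5
      = (-2 * r ^ 6 - r ^ 3 - 2 + A * r) / r ^ 6 := by
  field_simp

lemma deteq (r q1 q2 : ℝ) (hr : 0 < r) (h2 : r ^ 2 = q1 ^ 2 + q2 ^ 2) :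
    (1 / r ^ 5) ^ 2 * ((-2 * r ^ 5 + r ^ 2 - 3 * q1 ^ 2) * (r ^ 5 + r ^ 2 - 3 * q2 ^ 2)
        - -3 * q1 * q2 * (-3 * q1 * q2))
      = -2 - 1 / r ^ 3 - 2 / r ^ 6 + (6 * q2 ^ 2 - 3 * q1 ^ 2) / r ^ 5 := by
  have hinner : (-2 * r ^ 5 + r ^ 2 - 3 * q1 ^ 2) * (r ^ 5 + r ^ 2 - 3 * q2 ^ 2)
        - -3 * q1 * q2 * (-3 * q1 * q2)
      = -2 * r ^ 10 - r ^ 7 + (6 * q2 ^ 2 - 3 * q1 ^ 2) * r ^ 5 - 2 * r ^ 4 := by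
    linear_combination (3 * r ^ 2) * h2
  rw [hinner]
  field_simp
  ring

/-- For every `q ∈ 𝔯`, the determinant of `𝓗(q)` is negative, i.e.
`-2 - 1/|q|³ - 2/|q|⁶ + (6q₂² - 3q₁²)/|q|⁵ < 0`; consequently `𝓗(q)` has one
positive and one negative eigenvalue. -/
theorem hessian_det_negative (q : ℝ × ℝ) (hq : q ∈ HillRegion) :
    (Hmat q).det < 0 ∧
    -2 - 1 / (nrm q) ^ 3 - 2 / (nrm q) ^ 6
      + (6 * q.2 ^ 2 - 3 * q.1 ^ 2) / (nrm q) ^ 5 < 0 ∧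
    ∃ (lp ln : ℝ) (vp vn : Fin 2 → ℝ), 0 < lp ∧ ln < 0 ∧ vp ≠ 0 ∧ vn ≠ 0 ∧
      (Hmat q).mulVec vp = lp • vp ∧ (Hmat q).mulVec vn = ln • vn := by
  obtain ⟨h1, h2, h3⟩ := hq
  set r := nrm q with hrdef
  have hr0 : 0 ≤ r := Real.sqrt_nonneg _
  have hr2 : r ^ 2 = q.1 ^ 2 + q.2 ^ 2 := Real.sq_sqrt (by positivity)
  set c := (3:ℝ) ^ ((1:ℝ)/3) with hcdef
  have hc0 : 0 < c := Real.rpow_pos_of_pos (by norm_num) _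
  have hc3 : c ^ 3 = 3 := by
    rw [hcdef, ← Real.rpow_natCast ((3:ℝ) ^ ((1:ℝ)/3)) 3, ← Real.rpow_mul (by norm_num)]
    norm_num
  have h43 : (3:ℝ) ^ ((4:ℝ)/3) = 3 * c := by
    rw [hcdef, ← Real.rpow_one_add' (by norm_num) (by norm_num)]
    norm_num
  have hm13 : (3:ℝ) ^ (-(1:ℝ)/3) = c⁻¹ := by
    rw [hcdef, ← Real.rpow_neg (by norm_num)]
    norm_num
  have hq1 : q.1 ^ 2 < c⁻¹ ^ 2 := by
    rw [← hm13]
    calc q.1 ^ 2 = |q.1| ^ 2 := (sq_abs _).symm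
    _ < ((3:ℝ) ^ (-(1:ℝ)/3)) ^ 2 := by
        apply pow_lt_pow_left₀ h2 (abs_nonneg _) (by norm_num)
  have hinv : c < 1 / r := by
    have hcc : (3:ℝ)/2 * (c⁻¹^2) = 3 * c / 2 - c := by
      field_simp
      nlinarith [hc3]
    rw [h43] at h1
    nlinarith [h1, hq1]
  have hrpos : 0 < r := by
    rcases hr0.eq_or_lt with h | h
    · exfalso; rw [← h] at hinv; simp at hinv; linarith
    · exact h
  have h' : c * r < 1 := (lt_div_iff₀ hrpos).mp hinv
  have h'' : (c * r) ^ 3 < 1 := pow_lt_one₀ (by positivity) h' (by norm_num)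
  have hr3 : r ^ 3 < 1 / 3 := by nlinarith [h'', hc3, hrpos, hc0]
  have hq2r : q.2 ^ 2 ≤ r ^ 2 := by nlinarith [sq_nonneg q.1]
  have hnum : -2 * r ^ 6 - r ^ 3 - 2 + (6 * q.2 ^ 2 - 3 * q.1 ^ 2) * r < 0 := by
    nlinarith [hr3, hrpos, hq2r, sq_nonneg q.1, sq_nonneg q.2, sq_nonneg (r^3 - 1),
      mul_pos hrpos hrpos, pow_pos hrpos 3, pow_pos hrpos 6,
      mul_le_mul_of_nonneg_right hq2r hr0]
  have hkey : -2 - 1 / r ^ 3 - 2 / r ^ 6 + (6 * q.2 ^ 2 - 3 * q.1 ^ 2) / r ^ 5 < 0 := by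
    rw [keyeq _ _ hrpos]
    exact div_neg_of_neg_of_pos hnum (by positivity)
  have hdet_eq : (Hmat q).det
      = -2 - 1 / r ^ 3 - 2 / r ^ 6 + (6 * q.2 ^ 2 - 3 * q.1 ^ 2) / r ^ 5 := by
    rw [Hmat, Matrix.det_smul, Matrix.det_fin_two_of]
    rw [Fintype.card_fin, ← hrdef]
    exact deteq r q.1 q.2 hrpos hr2
  have hdet_neg : (Hmat q).det < 0 := by rw [hdet_eq]; exact hkey
  exact ⟨hdet_neg, hkey, eig2 (Hmat q) (by simp [Hmat]) hdet_neg⟩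

end
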